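/- The inverse of a nonsingular bdsw matrix is a full matrix, i.e., every entry of the inverse is nonzero. -/

import Mathlib

open Matrix Finset
open Fin.NatCast Fin.CommRing
/-- A *bi-diagonal south-west* (bdsw) matrix: the diagonal, the super diagonal and the
south-west corner entry are nonzero, and all other entries are zero. -/
def Bdsw {n : ℕ} (B : Matrix (Fin (n + 2)) (Fin (n + 2)) ℝ) : Prop :=
  (∀ i, B i i ≠ 0) ∧
  (∀ i j : Fin (n + 2), (j : ℕ) = (i : ℕ) + 1 → B i j ≠ 0) ∧
  (B (Fin.last (n + 1)) 0 ≠ 0) ∧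
  (∀ i j : Fin (n + 2), i ≠ j → (j : ℕ) ≠ (i : ℕ) + 1 →
    ¬(i = Fin.last (n + 1) ∧ j = 0) → B i j = 0)

theorem stmt4 {n : ℕ} (A : Matrix (Fin (n + 2)) (Fin (n + 2)) ℝ) (hA : Bdsw A)
    (hdet : A.det ≠ 0) : ∀ i j, A⁻¹ i j ≠ 0 := by
  set X := A⁻¹ with hX
  obtain ⟨hd, hsup, hcorner, hzero⟩ := hA
  -- the superdiagonal (cyclically) is nonzero
  have hone : (1 : Fin (n + 2)) ≠ 0 := by
    simp [Fin.ext_iff]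
  have hne : ∀ i : Fin (n + 2), i ≠ i + 1 := by
    intro i h
    exact hone (left_eq_add.mp h)
  have hs : ∀ i : Fin (n + 2), A i (i + 1) ≠ 0 := by
    intro i
    by_cases hi : i = Fin.last (n + 1)
    · subst hi; rw [Fin.last_add_one]; exact hcorner
    · have hlt : i < Fin.last (n + 1) := lt_of_le_of_ne (Fin.le_last i) hi
      exact hsup i (i + 1) (Fin.val_add_one_of_lt hlt)
  have hz : ∀ i k : Fin (n + 2), k ≠ i → k ≠ i + 1 → A i k = 0 := by
    intro i k h1 h2
    by_cases hi : i = Fin.last (n + 1)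
    · subst hi
      apply hzero _ _ (Ne.symm h1)
      · have := k.isLt
        simp [Fin.val_last]
        omega
      · rintro ⟨-, hk0⟩
        exact h2 (by rw [hk0, Fin.last_add_one])
    · have hlt : i < Fin.last (n + 1) := lt_of_le_of_ne (Fin.le_last i) hi
      apply hzero _ _ (Ne.symm h1)
      · intro hval
        exact h2 (Fin.ext (by rw [Fin.val_add_one_of_lt hlt, hval]))
      · rintro ⟨hi', -⟩; exact hi hi'
  have hmul : A * X = 1 := Matrix.mul_nonsing_inv A hdet.isUnit
  intro i j
  -- the key two-term recurrence
  have heq : ∀ k : Fin (n + 2),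
      A k k * X k j + A k (k + 1) * X (k + 1) j = (1 : Matrix (Fin (n+2)) (Fin (n+2)) ℝ) k j := by
    intro k
    have h := congrFun (congrFun hmul k) j
    rw [Matrix.mul_apply] at h
    rw [← h]
    rw [show (univ : Finset (Fin (n + 2))).sum (fun l => A k l * X l j)
        = ∑ l ∈ ({k, k + 1} : Finset (Fin (n+2))), A k l * X l j from
      (Finset.sum_subset (Finset.subset_univ _) (fun l _ hl => by
        simp only [Finset.mem_insert, Finset.mem_singleton, not_or] at hl
        rw [hz k l hl.1 hl.2, zero_mul])).symm]
    rw [Finset.sum_pair (hne k)]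
  by_contra h0
  -- zero propagation
  have zstep : ∀ k : Fin (n + 2), k ≠ j → X k j = 0 → X (k + 1) j = 0 := by
    intro k hk hXk
    have h := heq k
    rw [Matrix.one_apply_ne hk, hXk, mul_zero, zero_add] at h
    exact (mul_eq_zero.mp h).resolve_left (hs k)
  -- from the zero at (i,j) we get X j j = 0
  have hjj : X j j = 0 := by
    have key : ∀ m : ℕ, m ≤ (j - i).val → X (i + (m : Fin (n + 2))) j = 0 := by
      intro m
      induction m with
      | zero => intro _; simpa using h0
      | succ m ih =>
        intro hm
        have hm' : m < (j - i).val := by omega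
        have hne' : i + (m : Fin (n + 2)) ≠ j := by
          intro hcontra
          have : ((m : Fin (n + 2))) = j - i := by
            rw [← hcontra]; ring
          have hv : ((m : Fin (n + 2))).val = m := by
            rw [Fin.val_natCast]
            exact Nat.mod_eq_of_lt (lt_of_lt_of_le hm' (by omega))
          rw [this] at hv
          omega
        have := zstep _ hne' (ih (le_of_lt hm'))
        rwa [show i + (m : Fin (n + 2)) + 1 = i + ((m + 1 : ℕ) : Fin (n + 2)) by
          push_cast; ring] at this
    have := key (j - i).val le_rfl
    rwa [Fin.cast_val_eq_self, add_sub_cancel] at this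
  -- hence X (j+1) j ≠ 0
  have hstart : X (j + 1) j ≠ 0 := by
    have h := heq j
    rw [Matrix.one_apply_eq, hjj, mul_zero, zero_add] at h
    intro hcontra
    rw [hcontra, mul_zero] at h
    exact zero_ne_one h
  -- nonzero propagation around the cycle
  have nkey : ∀ m : ℕ, m ≤ n + 1 → X (j + 1 + (m : Fin (n + 2))) j ≠ 0 := by
    intro m
    induction m with
    | zero => intro _; simpa using hstart
    | succ m ih =>
      intro hm
      have hm' : m < n + 1 := by omega
      have hne' : j + 1 + (m : Fin (n + 2)) ≠ j := by
        intro hcontra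
        have : (1 : Fin (n + 2)) + (m : Fin (n + 2)) = 0 := by
          have := hcontra
          have h2 : j + ((1 : Fin (n+2)) + (m : Fin (n+2))) = j + 0 := by
            rw [add_zero, ← add_assoc]; exact hcontra
          exact add_left_cancel h2
        have hv : ((1 : Fin (n + 2)) + (m : Fin (n + 2))).val = 1 + m := by
          simp only [Fin.add_def, Fin.val_one, Fin.val_natCast, Fin.val_mk]
          rw [Nat.mod_eq_of_lt (show m < n + 2 by omega),
            Nat.mod_eq_of_lt (show 1 + m < n + 2 by omega)]
        rw [this] at hv
        simp only [Fin.val_zero] at hv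
        omega
      have hXk := ih (le_of_lt hm')
      have h := heq (j + 1 + (m : Fin (n + 2)))
      rw [Matrix.one_apply_ne hne'] at h
      have hX1 : X (j + 1 + (m : Fin (n + 2)) + 1) j ≠ 0 := by
        intro hcontra
        rw [hcontra, mul_zero, add_zero] at h
        exact (mul_ne_zero (hd _) hXk) h
      rwa [show j + 1 + (m : Fin (n + 2)) + 1 = j + 1 + ((m + 1 : ℕ) : Fin (n + 2)) by
        push_cast; ring] at hX1
  have hfinal := nkey (n + 1) le_rfl
  apply hfinal
  rw [show j + 1 + ((n + 1 : ℕ) : Fin (n + 2)) = j by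
    have h2 : ((n + 2 : ℕ) : Fin (n + 2)) = 0 := by simp
    have h3 : (1 : Fin (n + 2)) + ((n + 1 : ℕ) : Fin (n + 2)) = 0 := by
      rw [← h2]; push_cast; ring
    rw [add_assoc, h3, add_zero]]
  exact hjj
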